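/- For 0 < θ < π/4 with 2cos²θ ≥ 1.8, let f_θ(1) denote the image of the boundary point 1 under the hyperbolic rotation of angle 1 (radian) about z_θ = (1+e^{2iθ})/2. Then f_θ(1) = cos(1/2)·cos(θ)/cos(1/2 + θ), and this value is strictly less than 5/4. -/

import Mathlib

set_option maxHeartbeats 1000000


/-- for `0 < θ < π/4` with `2cos²θ ≥ 1.8`, the image `f_θ(1)` of the
boundary point `1` under the hyperbolic rotation of angle `1` about
`z_θ = (1+e^{2iθ})/2` (given by the Möbius transformation of matrix
`M·diag(e^{i/2}, e^{-i/2})·M⁻¹`, `M = [[z̄_θ, z_θ],[1,1]]`) equals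
`cos(1/2)·cos(θ)/cos(1/2 + θ)`, and this value is strictly less than `5/4`. -/
theorem stmt_17 (θ : ℝ) (hθ : 0 < θ) (hθ2 : θ < Real.pi / 4)
    (hc : (1.8 : ℝ) ≤ 2 * Real.cos θ ^ 2) :
    (let zθ : ℂ := (1 + Complex.exp (2 * θ * Complex.I)) / 2
     let M : Matrix (Fin 2) (Fin 2) ℂ := !![starRingEnd ℂ zθ, zθ; 1, 1]
     let D : Matrix (Fin 2) (Fin 2) ℂ :=
       !![Complex.exp (Complex.I / 2), 0; 0, Complex.exp (-Complex.I / 2)]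
     let g : Matrix (Fin 2) (Fin 2) ℂ := M * D * M⁻¹
     (g 0 0 * 1 + g 0 1) / (g 1 0 * 1 + g 1 1) =
       ((Real.cos (1 / 2) * Real.cos θ / Real.cos (1 / 2 + θ) : ℝ) : ℂ)) ∧
    Real.cos (1 / 2) * Real.cos θ / Real.cos (1 / 2 + θ) < 5 / 4 := by
  constructor
  ·
    intro zθ M D g
    have hzdef : zθ = (1 + Complex.exp (2 * θ * Complex.I)) / 2 := rfl
    have hMdef : M = !![starRingEnd ℂ zθ, zθ; 1, 1] := rfl
    have hDdef : D = !![Complex.exp (Complex.I / 2), 0; 0, Complex.exp (-Complex.I / 2)] := rfl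
    have hgdef : g = M * D * M⁻¹ := rfl
    clear_value zθ M D g
    have cos_def : ∀ x : ℂ, Complex.cos x = (Complex.exp (x * Complex.I) + Complex.exp (-x * Complex.I)) / 2 := fun x => rfl
    obtain ⟨u, hu⟩ : ∃ u : ℂ, u = Complex.exp (θ * Complex.I) := ⟨_, rfl⟩
    obtain ⟨v, hv⟩ : ∃ v : ℂ, v = Complex.exp (Complex.I / 2) := ⟨_, rfl⟩
    have hu0 : u ≠ 0 := hu ▸ Complex.exp_ne_zero _
    have hv0 : v ≠ 0 := hv ▸ Complex.exp_ne_zero _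
    have h2θ : Complex.exp (2 * θ * Complex.I) = u * u := by
      rw [hu, ← Complex.exp_add]; ring_nf
    have hm2θ : Complex.exp (-(2 * θ * Complex.I)) = (u * u)⁻¹ := by
      rw [← h2θ, Complex.exp_neg]
    have hvinv : Complex.exp (-Complex.I / 2) = v⁻¹ := by
      rw [hv, ← Complex.exp_neg]; ring_nf
    have hconj : starRingEnd ℂ zθ = (1 + (u * u)⁻¹) / 2 := by
      simp only [hzdef, map_div₀, map_add, map_one, ← Complex.exp_conj, map_ofNat]
      rw [show (starRingEnd ℂ) (2 * θ * Complex.I) = -(2 * θ * Complex.I) by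
        rw [map_mul, map_mul, Complex.conj_I, map_ofNat, Complex.conj_ofReal]; ring, hm2θ]
    have hz : zθ = (1 + u * u) / 2 := by rw [hzdef, h2θ]
    have hexp : ∀ x : ℝ, Complex.exp (x * Complex.I) = (Real.cos x : ℂ) + (Real.sin x : ℂ) * Complex.I := by
      intro x; rw [Complex.exp_mul_I, Complex.ofReal_cos, Complex.ofReal_sin]
    have hsin2 : (0:ℝ) < Real.sin (2*θ) := Real.sin_pos_of_pos_of_lt_pi (by linarith)
        (by nlinarith [Real.pi_gt_three])
    have hdval : (u * u)⁻¹ - u * u = -2 * (Real.sin (2*θ) : ℂ) * Complex.I := by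
      rw [← h2θ, ← Complex.exp_neg]
      rw [show ((2:ℂ) * θ * Complex.I) = ((2*θ:ℝ):ℂ) * Complex.I by push_cast; ring]
      rw [show (-(((2*θ:ℝ):ℂ) * Complex.I)) = ((-(2*θ):ℝ):ℂ) * Complex.I by push_cast; ring]
      rw [hexp, hexp, Real.cos_neg, Real.sin_neg]
      push_cast; ring
    have hd : (u * u)⁻¹ - u * u ≠ 0 := by
      rw [hdval]
      simp only [ne_eq, mul_eq_zero, Complex.I_ne_zero, or_false, Complex.ofReal_eq_zero]
      push_neg
      exact ⟨by norm_num, ne_of_gt hsin2⟩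
    obtain ⟨e, he⟩ : ∃ e : ℂ, e = ((u * u)⁻¹ - u * u) / 2 := ⟨_, rfl⟩
    have he0 : e ≠ 0 := by
      rw [he]; exact div_ne_zero hd two_ne_zero
    have hMinv : M⁻¹ = !![e⁻¹, -zθ * e⁻¹; -e⁻¹, (starRingEnd ℂ zθ) * e⁻¹] := by
      apply Matrix.inv_eq_right_inv
      rw [hMdef]
      have hsub : starRingEnd ℂ zθ - zθ = e := by rw [hconj, hz, he]; ring
      rw [Matrix.mul_fin_two, Matrix.one_fin_two]
      ext i j
      fin_cases i <;> fin_cases j <;> simp <;> (try ring) <;> field_simp <;>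
        first
          | linear_combination hsub
          | linear_combination (e - 1) * hsub
          | linear_combination (1 - e) * hsub
          | linear_combination e * hsub
          | linear_combination (-e) * hsub
    -- helper exp/cos/sin facts
    have hen : ∀ x : ℝ, Complex.exp (((-x : ℝ) : ℂ) * Complex.I) = (Complex.exp ((x : ℂ) * Complex.I))⁻¹ := by
      intro x; push_cast; rw [neg_mul, Complex.exp_neg]
    have hcR : ∀ x : ℝ, ((Real.cos x : ℝ) : ℂ) = (Complex.exp ((x : ℂ) * Complex.I) + (Complex.exp ((x : ℂ) * Complex.I))⁻¹) / 2 := by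
      intro x
      rw [← hen, hexp, hexp, Real.cos_neg, Real.sin_neg]; push_cast; ring
    have hsR : ∀ x : ℝ, ((Real.sin x : ℝ) : ℂ) = (Complex.exp ((x : ℂ) * Complex.I) - (Complex.exp ((x : ℂ) * Complex.I))⁻¹) / (2 * Complex.I) := by
      intro x
      rw [← hen, hexp, hexp, Real.cos_neg, Real.sin_neg]
      field_simp
      push_cast; ring
    have hv12 : Complex.exp ((((1:ℝ)/2 : ℝ) : ℂ) * Complex.I) = v := by
      rw [hv]; norm_num; ring_nf
    have hvu : Complex.exp ((((1:ℝ)/2 + θ : ℝ) : ℂ) * Complex.I) = v * u := by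
      rw [hv, hu, ← Complex.exp_add]; push_cast; ring_nf
    have hcos12 : ((Real.cos (1/2) : ℝ) : ℂ) = (v + v⁻¹) / 2 := by
      rw [hcR, hv12]
    have hcosθC : ((Real.cos θ : ℝ) : ℂ) = (u + u⁻¹) / 2 := by
      rw [hcR, ← hu]
    have hcosS : ((Real.cos (1/2 + θ) : ℝ) : ℂ) = (v * u + (v * u)⁻¹) / 2 := by
      rw [hcR, hvu]
    have hsinθC : ((Real.sin θ : ℝ) : ℂ) = (u - u⁻¹) * (-Complex.I) / 2 := by
      rw [hsR, ← hu, div_eq_mul_inv, mul_inv, Complex.inv_I]; ring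
    -- entry identities
    have hgmat : g = !![(starRingEnd ℂ zθ) * v * e⁻¹ + zθ * v⁻¹ * (-e⁻¹),
          (starRingEnd ℂ zθ) * v * (-zθ * e⁻¹) + zθ * v⁻¹ * ((starRingEnd ℂ zθ) * e⁻¹);
          v * e⁻¹ + v⁻¹ * (-e⁻¹), v * (-zθ * e⁻¹) + v⁻¹ * ((starRingEnd ℂ zθ) * e⁻¹)] := by
      rw [hgdef, hMinv, hMdef, hDdef, hvinv, ← hv, Matrix.mul_fin_two, Matrix.mul_fin_two]
      congr 1 <;> ring_nf
    have hsinθ0 : ((Real.sin θ : ℝ) : ℂ) ≠ 0 := by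
      rw [Complex.ofReal_ne_zero]
      exact ne_of_gt (Real.sin_pos_of_pos_of_lt_pi hθ (by nlinarith [Real.pi_gt_three]))
    have hcosS0 : ((Real.cos (1/2 + θ) : ℝ) : ℂ) ≠ 0 := by
      rw [Complex.ofReal_ne_zero]
      refine ne_of_gt (Real.cos_pos_of_mem_Ioo ⟨by linarith [Real.pi_pos], ?_⟩)
      nlinarith [Real.pi_gt_three]
    have hvu0 : v * u ≠ 0 := mul_ne_zero hv0 hu0
    obtain ⟨u', hu'⟩ : ∃ w : ℂ, w = u⁻¹ := ⟨_, rfl⟩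
    obtain ⟨v', hv'⟩ : ∃ w : ℂ, w = v⁻¹ := ⟨_, rfl⟩
    have h1 : u * u' = 1 := by rw [hu']; exact mul_inv_cancel₀ hu0
    have h2 : v * v' = 1 := by rw [hv']; exact mul_inv_cancel₀ hv0
    have h3 : Complex.I ^ 2 = -1 := Complex.I_sq
    have huu : (u * u)⁻¹ = u' * u' := by rw [hu', mul_inv]
    have hvu' : (v * u)⁻¹ = v' * u' := by rw [hu', hv', mul_inv]
    have hA : g 0 0 * 1 + g 0 1 = e⁻¹ * (-2 * Complex.I) * ((Real.sin θ : ℝ) : ℂ) * ((Real.cos θ : ℝ) : ℂ) * ((Real.cos (1/2) : ℝ) : ℂ) := by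
      rw [hgmat]
      simp only [Matrix.cons_val', Matrix.cons_val_zero, Matrix.cons_val_one, Matrix.head_cons,
        Matrix.empty_val', Matrix.cons_val_fin_one, Matrix.of_apply, Matrix.vecHead, Matrix.vecTail]
      rw [hconj, hz, hcos12, hcosθC, hsinθC, huu, ← hu', ← hv']
      linear_combination (-(e⁻¹ * (v - v') * (1 + u * u') / 4)) * h1 +
        (-(e⁻¹ * (u ^ 2 - u' ^ 2) * (v + v') / 4)) * h3
    have hB : g 1 0 * 1 + g 1 1 = e⁻¹ * (-2 * Complex.I) * ((Real.sin θ : ℝ) : ℂ) * ((Real.cos (1/2 + θ) : ℝ) : ℂ) := by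
      rw [hgmat]
      simp only [Matrix.cons_val', Matrix.cons_val_zero, Matrix.cons_val_one, Matrix.head_cons,
        Matrix.empty_val', Matrix.cons_val_fin_one, Matrix.of_apply, Matrix.vecHead, Matrix.vecTail]
      rw [hconj, hz, hcosS, hsinθC, huu, hvu', ← hu', ← hv']
      linear_combination (e⁻¹ * (v' - v) / 2) * h1 -
        (e⁻¹ * (u - u') * (v * u + v' * u') / 2) * h3
    have hK0 : e⁻¹ * (-2 * Complex.I) * ((Real.sin θ : ℝ) : ℂ) ≠ 0 :=
      mul_ne_zero (mul_ne_zero (inv_ne_zero he0) (by simp [Complex.I_ne_zero])) hsinθ0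
    rw [hA, hB,
      show e⁻¹ * (-2 * Complex.I) * ((Real.sin θ : ℝ) : ℂ) * ((Real.cos θ : ℝ) : ℂ) *
          ((Real.cos (1/2) : ℝ) : ℂ) =
        (e⁻¹ * (-2 * Complex.I) * ((Real.sin θ : ℝ) : ℂ)) *
          (((Real.cos (1/2) : ℝ) : ℂ) * ((Real.cos θ : ℝ) : ℂ)) from by ring,
      mul_div_mul_left _ _ hK0]
    push_cast
    ring
  · have hcosθ : 0 < Real.cos θ := Real.cos_pos_of_mem_Ioo
      ⟨by linarith [Real.pi_pos], by nlinarith [Real.pi_gt_three]⟩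
    have hsinθ : 0 < Real.sin θ :=
      Real.sin_pos_of_pos_of_lt_pi hθ (by nlinarith [Real.pi_gt_three])
    have hsq : Real.sin θ ^ 2 + Real.cos θ ^ 2 = 1 := Real.sin_sq_add_cos_sq θ
    have htan : 3 * Real.sin θ ≤ Real.cos θ := by nlinarith
    have hs2 : Real.sin (1/2) < 1/2 := by
      have := Real.sin_lt (x := 1/2) (by norm_num); linarith
    have hc2 : (7:ℝ)/8 < Real.cos (1/2) := by
      have := Real.one_sub_sq_div_two_lt_cos (x := 1/2) (by norm_num); nlinarith
    have hs2pos : 0 < Real.sin (1/2) :=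
      Real.sin_pos_of_pos_of_lt_pi (by norm_num) (by nlinarith [Real.pi_gt_three])
    have hden : 0 < Real.cos (1/2 + θ) := Real.cos_pos_of_mem_Ioo
      ⟨by linarith [Real.pi_pos], by nlinarith [Real.pi_gt_three]⟩
    rw [div_lt_iff₀ hden, Real.cos_add]
    nlinarith
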